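/- One-step version of the projection lemma: Let E ⊆ ℝ^n be an F_σ set with |E| = t ∈ (0,∞). Then there exists an F_σ set E_1 ⊆ E with |E_1| = t/2 such that for every F_σ set A ⊆ E with |A| ≥ t/2, the (n−1)-measure of Π_1(E_1) is at most the (n−1)-measure of Π_1(A). -/

import Mathlib

open MeasureTheory

/-- A set is F_σ if it is a countable union of closed sets. -/
def IsFsigma {X : Type*} [TopologicalSpace X] (s : Set X) : Prop :=
  ∃ g : ℕ → Set X, (∀ i, IsClosed (g i)) ∧ s = ⋃ i, g i

/-- The orthogonal projection of ℝ^n onto the coordinate hyperplane x_j = 0,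
identified with ℝ^{n-1}. -/
def projHyp {n : ℕ} (j : Fin n) (x : Fin n → ℝ) : {i : Fin n // i ≠ j} → ℝ :=
  fun i => x i.1

open Set


lemma splitLemma {ι : Type*} [Fintype ι] (i₀ : ι)
    (D : Set (ι → ℝ)) (hD : MeasurableSet D) (hfin : volume D ≠ ⊤)
    {r : ENNReal} (hr : r ≤ volume D) :
    ∃ W, W ⊆ D ∧ MeasurableSet W ∧ volume W = r := by
  rcases eq_or_lt_of_le hr with hr' | hrlt
  · exact ⟨D, subset_rfl, hD, hr'.symm⟩
  rcases eq_or_ne r 0 with hr0 | hr0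
  · exact ⟨∅, empty_subset _, MeasurableSet.empty, by simp [hr0]⟩
  set g : ℝ → Set (ι → ℝ) := fun c => D ∩ {y : ι → ℝ | y i₀ ≤ c} with hg
  set f : ℝ → ENNReal := fun c => volume (g c) with hf
  have hgmono : ∀ {a b : ℝ}, a ≤ b → g a ⊆ g b := by
    intro a b hab y hy
    exact ⟨hy.1, show y i₀ ≤ b from le_trans hy.2 hab⟩
  have hmeas : ∀ c : ℝ, MeasurableSet (g c) := fun c =>
    hD.inter (measurableSet_le (measurable_pi_apply i₀) measurable_const)
  have hgfin : ∀ c : ℝ, volume (g c) ≠ ⊤ := fun c =>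
    ne_top_of_le_ne_top hfin (measure_mono inter_subset_left)
  have hmono : Monotone f := fun a b hab => measure_mono (hgmono hab)
  have hhyp : ∀ c : ℝ, volume {y : ι → ℝ | y i₀ = c} = 0 := by
    intro c
    rw [volume_pi]
    exact Measure.pi_hyperplane (fun _ => (volume : Measure ℝ)) i₀ c
  -- supremum over naturals is volume D
  have hsup : (⨆ n : ℕ, f n) = volume D := by
    have h1 : (⋃ n : ℕ, g n) = D := by
      ext y
      simp only [hg, mem_iUnion, mem_inter_iff, mem_setOf_eq]
      exact ⟨fun ⟨n, hn, _⟩ => hn, fun hy => (exists_nat_ge (y i₀)).imp fun n hn => ⟨hy, hn⟩⟩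
    rw [hf, ← h1, Monotone.measure_iUnion]
    intro a b hab
    exact hgmono (by exact_mod_cast hab)
  have hinf : (⨅ m : ℕ, f (-(m:ℝ))) = 0 := by
    have h1 : (⋂ m : ℕ, g (-(m:ℝ))) = ∅ := by
      ext y
      simp only [hg, mem_iInter, mem_inter_iff, mem_setOf_eq, mem_empty_iff_false, iff_false]
      intro h
      obtain ⟨m, hm⟩ := exists_nat_ge (-(y i₀) + 1)
      have := (h m).2
      linarith
    calc (⨅ m : ℕ, f (-(m:ℝ))) = volume (⋂ m : ℕ, g (-(m:ℝ))) := by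
          refine (Directed.measure_iInter (fun m => (hmeas _).nullMeasurableSet) ?_
            ⟨0, hgfin _⟩).symm
          intro a b
          exact ⟨max a b, hgmono (by push_cast; simp), hgmono (by push_cast; simp)⟩
      _ = 0 := by rw [h1, measure_empty]
  have hA : ∃ c : ℝ, r ≤ f c := by
    obtain ⟨n, hn⟩ := lt_iSup_iff.mp (hsup ▸ hrlt)
    exact ⟨n, hn.le⟩
  have hB : ∃ m : ℕ, f (-(m:ℝ)) < r := by
    by_contra h
    push_neg at h
    exact hr0 (le_zero_iff.mp (hinf ▸ le_iInf h))
  obtain ⟨m₀, hm₀⟩ := hB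
  set A : Set ℝ := {c | r ≤ f c} with hAdef
  have hAne : A.Nonempty := hA
  have hAbdd : BddBelow A := by
    refine ⟨-(m₀:ℝ), fun c hc => ?_⟩
    by_contra h
    push_neg at h
    exact absurd (le_trans hc (hmono h.le)) (not_le.mpr hm₀)
  set c₀ : ℝ := sInf A with hc₀
  have h1 : r ≤ f c₀ := by
    have key : ∀ k : ℕ, r ≤ f (c₀ + 1/(k+1)) := by
      intro k
      have hpos : (0:ℝ) < 1/(k+1) := by positivity
      obtain ⟨c, hcA, hcb⟩ := (csInf_lt_iff hAbdd hAne).mp (lt_add_of_pos_right c₀ hpos)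
      exact le_trans hcA (hmono hcb.le)
    have hiInter : g c₀ = ⋂ k : ℕ, g (c₀ + 1/(k+1)) := by
      ext y
      simp only [hg, mem_iInter, mem_inter_iff, mem_setOf_eq]
      constructor
      · intro ⟨hy, hy2⟩ k
        have hpos : (0:ℝ) < 1/(k+1) := by positivity
        exact ⟨hy, by linarith⟩
      · intro h
        refine ⟨(h 0).1, ?_⟩
        by_contra hcon
        push_neg at hcon
        obtain ⟨k, hk⟩ := exists_nat_one_div_lt (sub_pos.mpr hcon)
        have := (h k).2
        linarith
    have heq : f c₀ = ⨅ k : ℕ, f (c₀ + 1/(k+1)) := by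
      rw [hf]
      simp only
      rw [hiInter]
      refine Directed.measure_iInter (fun k => (hmeas _).nullMeasurableSet) ?_ ⟨0, hgfin _⟩
      intro a b
      have hab : ∀ {p q : ℕ}, p ≤ q → c₀ + 1/(q+1) ≤ c₀ + 1/(p+1) := by
        intro p q hpq
        have : (1:ℝ)/(q+1) ≤ 1/(p+1) := by
          apply one_div_le_one_div_of_le
          · positivity
          · have := (Nat.cast_le (α := ℝ)).mpr hpq; linarith
        linarith
      exact ⟨max a b, hgmono (hab (le_max_left a b)), hgmono (hab (le_max_right a b))⟩
    rw [heq]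
    exact le_iInf key
  have h2 : f c₀ ≤ r := by
    have hless : ∀ k : ℕ, f (c₀ - 1/(k+1)) ≤ r := by
      intro k
      have hpos : (0:ℝ) < 1/(k+1) := by positivity
      have hnotin : (c₀ - 1/(k+1)) ∉ A := fun hmem =>
        absurd (csInf_le hAbdd hmem) (not_le.mpr (by linarith))
      simp only [hAdef, mem_setOf_eq, not_le] at hnotin
      exact hnotin.le
    have hUnion : (D ∩ {y : ι → ℝ | y i₀ < c₀}) = ⋃ k : ℕ, g (c₀ - 1/(k+1)) := by
      ext y
      simp only [hg, mem_iUnion, mem_inter_iff, mem_setOf_eq]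
      constructor
      · intro ⟨hy, hy2⟩
        obtain ⟨k, hk⟩ := exists_nat_one_div_lt (sub_pos.mpr hy2)
        exact ⟨k, hy, by linarith⟩
      · rintro ⟨k, hy, hy2⟩
        have hpos : (0:ℝ) < 1/(k+1) := by positivity
        exact ⟨hy, by linarith⟩
    have hflt : f c₀ = volume (D ∩ {y : ι → ℝ | y i₀ < c₀}) := by
      refine le_antisymm ?_ (measure_mono (inter_subset_inter_right _ fun y hy =>
        (show y i₀ < c₀ from hy).le))
      calc f c₀ ≤ volume ((D ∩ {y : ι → ℝ | y i₀ < c₀}) ∪ {y : ι → ℝ | y i₀ = c₀}) := by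
            refine measure_mono ?_
            rintro y ⟨hy, hy2⟩
            rcases lt_or_eq_of_le (show y i₀ ≤ c₀ from hy2) with h | h
            · exact Or.inl ⟨hy, h⟩
            · exact Or.inr h
        _ ≤ volume (D ∩ {y : ι → ℝ | y i₀ < c₀}) + volume {y : ι → ℝ | y i₀ = c₀} :=
            measure_union_le _ _
        _ = volume (D ∩ {y : ι → ℝ | y i₀ < c₀}) := by rw [hhyp c₀, add_zero]
    have hmono2 : Monotone fun k : ℕ => g (c₀ - 1/(k+1)) := by
      intro p q hpq
      refine hgmono ?_
      have : (1:ℝ)/(q+1) ≤ 1/(p+1) := by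
        apply one_div_le_one_div_of_le
        · positivity
        · have := (Nat.cast_le (α := ℝ)).mpr hpq; linarith
      linarith
    rw [hflt, hUnion, Monotone.measure_iUnion hmono2]
    exact iSup_le hless
  exact ⟨g c₀, inter_subset_left, hmeas c₀, le_antisymm h2 h1⟩


lemma bathtub {Y : Type*} [MeasurableSpace Y] (ν : Measure Y)
    (hsplit : ∀ D : Set Y, MeasurableSet D → ν D ≠ ⊤ → ∀ r ≤ ν D,
      ∃ W, W ⊆ D ∧ MeasurableSet W ∧ ν W = r)
    (σ : Y → ENNReal) (hσ : Measurable σ) (c tE : ENNReal)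
    (htot : ∫⁻ y, σ y ∂ν = tE) (htE : tE ≠ ⊤) (hc0 : c ≠ 0) (hclt : c < tE) :
    ∃ S, MeasurableSet S ∧ (∫⁻ y in S, σ y ∂ν) = c ∧
      ∀ T, MeasurableSet T → c ≤ ∫⁻ y in T, σ y ∂ν → ν S ≤ ν T := by
  classical
  set ρ : Measure Y := ν.withDensity σ with hρ
  have hρ_apply : ∀ {s : Set Y}, MeasurableSet s → ρ s = ∫⁻ y in s, σ y ∂ν := by
    intro s hs; rw [hρ, withDensity_apply _ hs]
  have hρuniv : ρ univ = tE := by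
    rw [hρ_apply MeasurableSet.univ, setLIntegral_univ, htot]
  have hρfin : ∀ s : Set Y, ρ s ≠ ⊤ := fun s =>
    ne_top_of_le_ne_top (hρuniv ▸ htE) (measure_mono (subset_univ s))
  -- level sets
  set Lv : ENNReal → Set Y := fun l => {y | l < σ y} with hLv
  have hLvMeas : ∀ l, MeasurableSet (Lv l) := fun l => hσ measurableSet_Ioi
  have hLvAnti : ∀ {a b : ENNReal}, a ≤ b → Lv b ⊆ Lv a := fun hab y hy =>
    lt_of_le_of_lt hab hy
  -- the defining set
  set S₀ : Set ENNReal := {l | ρ (Lv l) ≤ c} with hS₀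
  -- some natural number belongs to S₀
  have hMeasTop : MeasurableSet {y | σ y = ⊤} := hσ (measurableSet_singleton ⊤)
  have hρinfty : ρ {y | σ y = ⊤} = 0 := by
    apply withDensity_absolutelyContinuous ν σ
    by_contra hne
    have h1 : (∫⁻ y in {y | σ y = ⊤}, σ y ∂ν) = ⊤ := by
      calc (∫⁻ y in {y | σ y = ⊤}, σ y ∂ν) = ∫⁻ _ in {y | σ y = ⊤}, ⊤ ∂ν :=
            setLIntegral_congr_fun hMeasTop
              (fun y hy => hy)
        _ = ⊤ * ν {y | σ y = ⊤} := setLIntegral_const _ _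
        _ = ⊤ := by rw [ENNReal.top_mul hne]
    have := hρ_apply hMeasTop ▸ h1
    exact (hρfin _) this
  have hlow : ρ {y | σ y < ⊤} = tE := by
    have hsplit2 : ρ {y | σ y < ⊤} + ρ {y | σ y = ⊤} = ρ univ := by
      rw [← measure_union _ hMeasTop]
      · congr 1
        ext y
        simp only [mem_union, mem_setOf_eq, lt_top_iff_ne_top, mem_univ, iff_true]
        exact Or.symm (em _)
      · exact Set.disjoint_left.mpr fun y hy1 hy2 =>
          absurd (show σ y = ⊤ from hy2) (show σ y < ⊤ from hy1).ne
    rw [hρinfty, add_zero] at hsplit2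
    rw [hsplit2, hρuniv]
  have hnatS₀ : ∃ n : ℕ, (n : ENNReal) ∈ S₀ := by
    have hUn : (⋃ n : ℕ, {y | σ y ≤ (n:ENNReal)}) = {y | σ y < ⊤} := by
      ext y
      simp only [mem_iUnion, mem_setOf_eq, lt_top_iff_ne_top]
      constructor
      · rintro ⟨n, hn⟩; exact ne_top_of_le_ne_top (by simp) hn
      · intro h; obtain ⟨n, hn⟩ := ENNReal.exists_nat_gt h; exact ⟨n, hn.le⟩
    have hmono : Monotone fun n : ℕ => {y | σ y ≤ (n:ENNReal)} := fun p q hpq y hy =>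
      show σ y ≤ (q:ENNReal) from le_trans hy (by exact_mod_cast hpq)
    have hsup : (⨆ n : ℕ, ρ {y | σ y ≤ (n:ENNReal)}) = tE := by
      rw [← Monotone.measure_iUnion hmono, hUn, hlow]
    have h2 : tE - c < tE := ENNReal.sub_lt_self htE (by rintro rfl; exact (not_lt_bot hclt)) hc0
    have h2x : tE - c < ⨆ n : ℕ, ρ {y | σ y ≤ (n:ENNReal)} := by rw [hsup]; exact h2
    obtain ⟨n, hn⟩ := lt_iSup_iff.mp h2x
    refine ⟨n, ?_⟩
    have hcompl : ρ (Lv n) + ρ {y | σ y ≤ (n:ENNReal)} = tE := by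
      have hIic : MeasurableSet {y | σ y ≤ (n:ENNReal)} := hσ measurableSet_Iic
      rw [← hρuniv, ← measure_union _ hIic]
      · congr 1
        ext y
        simp only [hLv, mem_union, mem_setOf_eq, mem_univ, iff_true]
        exact (lt_or_ge _ _)
      · exact Set.disjoint_left.mpr fun y hy1 hy2 =>
          absurd (show σ y ≤ (n:ENNReal) from hy2) (not_le.mpr (show (n:ENNReal) < σ y from hy1))
    have : ρ (Lv n) = tE - ρ {y | σ y ≤ (n:ENNReal)} :=
      ENNReal.eq_sub_of_add_eq (hρfin _) hcompl
    rw [hS₀, mem_setOf_eq, this]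
    exact tsub_le_iff_right.mpr (by
      calc tE ≤ (tE - c) + c := le_tsub_add
        _ ≤ ρ {y | σ y ≤ (n:ENNReal)} + c := add_le_add_left hn.le c
        _ = c + ρ {y | σ y ≤ (n:ENNReal)} := add_comm _ _)
  obtain ⟨n₀, hn₀⟩ := hnatS₀
  set l₀ : ENNReal := sInf S₀ with hl₀
  have hl₀top : l₀ ≠ ⊤ := ne_top_of_le_ne_top (by simp) (sInf_le hn₀)
  -- ρ (Lv l₀) ≤ c
  have hup : ρ (Lv l₀) ≤ c := by
    set u : ℕ → ENNReal := fun k => l₀ + (k : ENNReal)⁻¹ with hu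
    have humem : ∀ k : ℕ, ρ (Lv (u k)) ≤ c := by
      intro k
      have hlt : l₀ < u k := ENNReal.lt_add_right hl₀top (by simp)
      obtain ⟨l, hlS, hll⟩ := sInf_lt_iff.mp hlt
      exact le_trans (measure_mono (hLvAnti hll.le)) hlS
    have hUn : Lv l₀ = ⋃ k : ℕ, Lv (u k) := by
      ext y
      simp only [hLv, mem_iUnion, mem_setOf_eq]
      constructor
      · intro hy
        rcases eq_or_ne (σ y) ⊤ with htop | htop
        · refine ⟨1, ?_⟩
          have : u 1 < ⊤ := ENNReal.add_lt_top.mpr ⟨hl₀top.lt_top, by simp⟩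
          rw [htop]
          exact this
        · have hpos : σ y - l₀ ≠ 0 := by
            simp only [ne_eq, tsub_eq_zero_iff_le, not_le]; exact hy
          obtain ⟨k, hk⟩ := ENNReal.exists_inv_nat_lt hpos
          refine ⟨k, ?_⟩
          calc l₀ + (k:ENNReal)⁻¹ < l₀ + (σ y - l₀) := by
                exact ENNReal.add_lt_add_left hl₀top hk
            _ = σ y := add_tsub_cancel_of_le hy.le
      · rintro ⟨k, hk⟩
        exact lt_of_le_of_lt le_self_add hk
    have hmono : Monotone fun k : ℕ => Lv (u k) := by
      intro p q hpq
      refine hLvAnti (add_le_add_right ?_ l₀)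
      exact ENNReal.inv_le_inv.mpr (by exact_mod_cast hpq)
    rw [hUn, Monotone.measure_iUnion hmono]
    exact iSup_le humem
  -- l₀ ≠ 0
  have hl₀0 : l₀ ≠ 0 := by
    intro hl0
    rw [hl0] at hup
    have hMeasZero : MeasurableSet {y | σ y = 0} := hσ (measurableSet_singleton 0)
    have h0 : ρ {y | σ y = 0} = 0 := by
      rw [hρ_apply hMeasZero]
      calc (∫⁻ y in {y | σ y = 0}, σ y ∂ν) = ∫⁻ _ in {y | σ y = 0}, 0 ∂ν :=
            setLIntegral_congr_fun hMeasZero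
              (fun y hy => hy)
        _ = 0 := by simp
    have hfull : ρ (Lv 0) = tE := by
      have : ρ (Lv 0) + ρ {y | σ y = 0} = ρ univ := by
        rw [← measure_union _ hMeasZero]
        · congr 1
          ext y
          simp only [hLv, mem_union, mem_setOf_eq, mem_univ, iff_true, pos_iff_ne_zero]
          exact ne_or_eq _ _
        · exact Set.disjoint_left.mpr fun y hy1 hy2 =>
            absurd (show σ y = 0 from hy2) (show (0:ENNReal) < σ y from hy1).ne' 
      rw [h0, add_zero] at this
      rw [this, hρuniv]
    rw [hfull] at hup
    exact absurd hclt (not_lt.mpr hup)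
  -- ρ {σ ≥ l₀} ≥ c
  set V : Set Y := {y | l₀ ≤ σ y} with hV
  have hVMeas : MeasurableSet V := hσ measurableSet_Ici
  have hdown : c ≤ ρ V := by
    set u : ℕ → ENNReal := fun k => l₀ - (k : ENNReal)⁻¹ with hu
    have hult : ∀ k : ℕ, u k < l₀ := by
      intro k
      cases k with
      | zero => simpa [hu, ENNReal.sub_top] using pos_iff_ne_zero.mpr hl₀0
      | succ m => exact ENNReal.sub_lt_self hl₀top hl₀0 (by simp)
    have hugt : ∀ k : ℕ, c < ρ (Lv (u k)) := by
      intro k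
      have : u k ∉ S₀ := fun hmem => absurd (sInf_le hmem) (not_le.mpr (hult k))
      simpa [hS₀, not_le] using this
    have hInt : V = ⋂ k : ℕ, Lv (u k) := by
      ext y
      simp only [hV, hLv, mem_iInter, mem_setOf_eq]
      constructor
      · intro hy k
        exact lt_of_lt_of_le (hult k) hy
      · intro h
        by_contra hcon
        push_neg at hcon
        have hpos : l₀ - σ y ≠ 0 := by
          simp only [ne_eq, tsub_eq_zero_iff_le, not_le]; exact hcon
        obtain ⟨k, hk⟩ := ENNReal.exists_inv_nat_lt hpos
        have hk2 : σ y + (k:ENNReal)⁻¹ < l₀ := by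
          calc σ y + (k:ENNReal)⁻¹ < σ y + (l₀ - σ y) :=
                ENNReal.add_lt_add_left (ne_top_of_lt (lt_of_lt_of_le hcon le_top)) hk
            _ = l₀ := add_tsub_cancel_of_le hcon.le
        have hk3 : σ y ≤ l₀ - (k:ENNReal)⁻¹ :=
          ENNReal.le_sub_of_add_le_right (ne_top_of_lt hk) hk2.le
        exact absurd (h k) (not_lt.mpr hk3)
    have hanti : ∀ p q : ℕ, p ≤ q → Lv (u q) ⊆ Lv (u p) := by
      intro p q hpq
      refine hLvAnti (tsub_le_tsub_left ?_ l₀)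
      exact ENNReal.inv_le_inv.mpr (by exact_mod_cast hpq)
    rw [hInt, Directed.measure_iInter (fun k => (hLvMeas _).nullMeasurableSet) ?_ ⟨0, hρfin _⟩]
    · exact le_iInf fun k => (hugt k).le
    · intro a b
      exact ⟨max a b, hanti a _ (le_max_left a b), hanti b _ (le_max_right a b)⟩
  -- the level piece
  set U : Set Y := Lv l₀ with hU
  have hUMeas : MeasurableSet U := hLvMeas l₀
  have hUV : U ⊆ V := fun y hy => show l₀ ≤ σ y from le_of_lt hy
  set Dlev : Set Y := V \ U with hDlev
  have hDlevMeas : MeasurableSet Dlev := hVMeas.diff hUMeas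
  have hDlevEq : ∀ y ∈ Dlev, σ y = l₀ := by
    rintro y ⟨hy1, hy2⟩
    simp only [hU, hLv, mem_setOf_eq, not_lt] at hy2
    exact le_antisymm hy2 hy1
  have hρDlev : ρ Dlev = l₀ * ν Dlev := by
    rw [hρ_apply hDlevMeas]
    calc (∫⁻ y in Dlev, σ y ∂ν) = ∫⁻ _ in Dlev, l₀ ∂ν :=
          setLIntegral_congr_fun hDlevMeas hDlevEq
      _ = l₀ * ν Dlev := setLIntegral_const _ _
  have hνDlev : ν Dlev ≠ ⊤ := by
    intro hcon
    have : ρ Dlev = ⊤ := by rw [hρDlev, hcon, ENNReal.mul_top hl₀0]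
    exact hρfin _ this
  have hρVsplit : ρ U + ρ Dlev = ρ V := by
    have := measure_inter_add_diff (μ := ρ) V hUMeas
    rwa [inter_eq_self_of_subset_right hUV] at this
  -- choose the exact piece W inside Dlev
  have hrle : (c - ρ U) / l₀ ≤ ν Dlev := by
    have h1 : c - ρ U ≤ ρ Dlev := by
      refine tsub_le_iff_left.mpr ?_
      rw [hρVsplit]
      exact hdown
    rw [hρDlev] at h1
    rw [ENNReal.div_le_iff hl₀0 hl₀top]
    rwa [mul_comm] at h1
  obtain ⟨W, hWD, hWMeas, hWvol⟩ := hsplit Dlev hDlevMeas hνDlev _ hrle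
  have hWσ : ∀ y ∈ W, σ y = l₀ := fun y hy => hDlevEq y (hWD hy)
  have hρW : ρ W = c - ρ U := by
    rw [hρ_apply hWMeas]
    calc (∫⁻ y in W, σ y ∂ν) = ∫⁻ _ in W, l₀ ∂ν :=
          setLIntegral_congr_fun hWMeas hWσ
      _ = l₀ * ν W := setLIntegral_const _ _
      _ = l₀ * ((c - ρ U) / l₀) := by rw [hWvol]
      _ = c - ρ U := by
          rw [mul_comm, ENNReal.div_mul_cancel hl₀0 hl₀top]
  set S : Set Y := U ∪ W with hS
  have hSMeas : MeasurableSet S := hUMeas.union hWMeas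
  have hDisj : Disjoint U W := by
    refine Set.disjoint_left.mpr fun y hyU hyW => ?_
    exact absurd hyU (hWD hyW).2
  have hρS : ρ S = c := by
    rw [hS, measure_union hDisj hWMeas, hρW, add_tsub_cancel_of_le hup]
  -- σ ≥ l₀ on S, σ ≤ l₀ off S
  have hSlow : ∀ y ∈ S, l₀ ≤ σ y := by
    rintro y (hy | hy)
    · exact le_of_lt hy
    · exact (hWσ y hy).symm.le
  have hShigh : ∀ y, y ∉ S → σ y ≤ l₀ := by
    intro y hy
    have : y ∉ U := fun h => hy (Or.inl h)
    simpa [hU, hLv, not_lt] using this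
  refine ⟨S, hSMeas, by rw [← hρ_apply hSMeas]; exact hρS, ?_⟩
  intro T hTMeas hTc
  have hρT : c ≤ ρ T := by rw [hρ_apply hTMeas]; exact hTc
  -- compare measures
  have hkey : l₀ * ν (S \ T) ≤ l₀ * ν (T \ S) := by
    have e1 : l₀ * ν (S \ T) ≤ ρ (S \ T) := by
      rw [hρ_apply (hSMeas.diff hTMeas), ← setLIntegral_const]
      exact setLIntegral_mono' (hSMeas.diff hTMeas) fun y hy => hSlow y hy.1
    have e2 : ρ (S \ T) ≤ c - ρ (S ∩ T) := by
      refine ENNReal.le_sub_of_add_le_left (hρfin _) ?_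
      rw [measure_inter_add_diff S hTMeas]
      exact le_of_eq hρS
    have e3 : c - ρ (S ∩ T) ≤ ρ (T \ S) := by
      refine tsub_le_iff_left.mpr ?_
      calc c ≤ ρ T := hρT
        _ = ρ (T ∩ S) + ρ (T \ S) := (measure_inter_add_diff T hSMeas).symm
        _ = ρ (S ∩ T) + ρ (T \ S) := by rw [inter_comm]
    have e4 : ρ (T \ S) ≤ l₀ * ν (T \ S) := by
      rw [hρ_apply (hTMeas.diff hSMeas), ← setLIntegral_const]
      exact setLIntegral_mono' (hTMeas.diff hSMeas) fun y hy => hShigh y hy.2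
    exact le_trans e1 (le_trans e2 (le_trans e3 e4))
  have hcancel : ν (S \ T) ≤ ν (T \ S) :=
    (ENNReal.mul_le_mul_iff_right hl₀0 hl₀top).mp hkey
  calc ν S = ν (S ∩ T) + ν (S \ T) := (measure_inter_add_diff S hTMeas).symm
    _ ≤ ν (S ∩ T) + ν (T \ S) := by gcongr
    _ = ν (T ∩ S) + ν (T \ S) := by rw [inter_comm]
    _ = ν T := measure_inter_add_diff T hSMeas

lemma IsFsigma.measurableSet'' {X : Type*} [TopologicalSpace X] [MeasurableSpace X]
    [OpensMeasurableSpace X] {s : Set X} (hs : IsFsigma s) : MeasurableSet s := by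
  obtain ⟨g, hg, rfl⟩ := hs
  exact MeasurableSet.iUnion fun i => (hg i).measurableSet

lemma IsFsigma.image_measurable {n : ℕ} {j : Fin n} {A : Set (Fin n → ℝ)}
    (hA : IsFsigma A) : MeasurableSet (projHyp j '' A) := by
  obtain ⟨g, hg, rfl⟩ := hA
  rw [image_iUnion]
  refine MeasurableSet.iUnion fun i => ?_
  have h1 : IsSigmaCompact (g i) :=
    IsSigmaCompact.of_isClosed_subset isSigmaCompact_univ (hg i) (subset_univ _)
  have hcont : Continuous (projHyp j) := continuous_pi fun i => continuous_apply i.1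
  obtain ⟨K, hK, hKeq⟩ := h1.image hcont
  rw [← hKeq]
  exact MeasurableSet.iUnion fun k => (hK k).isClosed.measurableSet

lemma exists_fsigma_subset_eq {n : ℕ} (B : Set (Fin n → ℝ)) (hB : MeasurableSet B)
    (hfin : volume B ≠ ⊤) :
    ∃ C, IsFsigma C ∧ C ⊆ B ∧ volume C = volume B := by
  have hch : ∀ k : ℕ, ∃ K, K ⊆ B ∧ IsCompact K ∧ volume B < volume K + ((k:ENNReal)+1)⁻¹ :=
    fun k => hB.exists_isCompact_lt_add hfin (by simp)
  choose K hKB hKc hKlt using hch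
  refine ⟨⋃ k, K k, ⟨K, fun k => (hKc k).isClosed, rfl⟩, iUnion_subset hKB, ?_⟩
  refine le_antisymm (measure_mono (iUnion_subset hKB)) ?_
  have hle : ∀ k : ℕ, volume B ≤ volume (⋃ k, K k) + ((k:ENNReal)+1)⁻¹ := fun k =>
    le_trans (hKlt k).le (add_le_add_left (measure_mono (subset_iUnion K k)) _)
  have h0 : (⨅ k : ℕ, ((k:ENNReal)+1)⁻¹) = 0 := by
    by_contra h
    obtain ⟨m, hm⟩ := ENNReal.exists_inv_nat_lt h
    have h1 : (⨅ k : ℕ, ((k:ENNReal)+1)⁻¹) ≤ ((m:ENNReal)+1)⁻¹ := iInf_le _ m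
    have h2 : ((m:ENNReal)+1)⁻¹ ≤ (m:ENNReal)⁻¹ := ENNReal.inv_le_inv.mpr le_self_add
    exact absurd (le_trans h1 h2) (not_le.mpr hm)
  calc volume B ≤ ⨅ k : ℕ, (volume (⋃ k, K k) + ((k:ENNReal)+1)⁻¹) := le_iInf hle
    _ = volume (⋃ k, K k) + ⨅ k : ℕ, ((k:ENNReal)+1)⁻¹ := by
        rw [ENNReal.add_iInf]
    _ = volume (⋃ k, K k) := by rw [h0, add_zero]


/-- One-step projection lemma: for an F_σ set E ⊆ ℝ^n with |E| = t ∈ (0,∞) there is an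
F_σ subset E₁ ⊆ E with |E₁| = t/2 whose projection Π₁ is minimal among projections of
F_σ subsets A ⊆ E with |A| ≥ t/2. -/
theorem stmt8 (n : ℕ) (hn : 0 < n) (E : Set (Fin n → ℝ)) (hE : IsFsigma E)
    (t : ℝ) (ht : 0 < t) (hEt : volume E = ENNReal.ofReal t) :
    ∃ E₁ : Set (Fin n → ℝ), IsFsigma E₁ ∧ E₁ ⊆ E ∧
      volume E₁ = ENNReal.ofReal (t / 2) ∧
      ∀ A : Set (Fin n → ℝ), IsFsigma A → A ⊆ E →
        ENNReal.ofReal (t / 2) ≤ volume A →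
        volume (projHyp (⟨0, hn⟩ : Fin n) '' E₁) ≤ volume (projHyp (⟨0, hn⟩ : Fin n) '' A) := by
  classical
  set j : Fin n := ⟨0, hn⟩ with hj
  have hEmeas : MeasurableSet E := hE.measurableSet''
  set c : ENNReal := ENNReal.ofReal (t/2) with hc
  have hc0 : c ≠ 0 := by
    simp only [hc, ne_eq, ENNReal.ofReal_eq_zero, not_le]
    linarith
  have hclt : c < ENNReal.ofReal t := by
    rw [hc]
    exact (ENNReal.ofReal_lt_ofReal_iff ht).mpr (by linarith)
  have hcleE : c ≤ volume E := by rw [hEt]; exact hclt.le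
  have htop : volume E ≠ ⊤ := by rw [hEt]; exact ENNReal.ofReal_ne_top
  by_cases hY : Nonempty {i : Fin n // i ≠ j}
  case neg =>
    have hempty : IsEmpty {i : Fin n // i ≠ j} := not_nonempty_iff.mp hY
    obtain ⟨W, hWE, hWmeas, hWvol⟩ := splitLemma j E hEmeas htop hcleE
    obtain ⟨E₁, hE₁fs, hE₁W, hE₁vol⟩ := exists_fsigma_subset_eq W hWmeas
      (by rw [hWvol]; exact ENNReal.ofReal_ne_top)
    rw [hWvol] at hE₁vol
    refine ⟨E₁, hE₁fs, hE₁W.trans hWE, hE₁vol, ?_⟩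
    intro A hAfs hAE hAvol
    have hE₁ne : E₁.Nonempty := by
      rw [nonempty_iff_ne_empty]
      rintro rfl
      rw [measure_empty] at hE₁vol
      exact hc0 hE₁vol.symm
    have hAne : A.Nonempty := by
      rw [nonempty_iff_ne_empty]
      rintro rfl
      rw [measure_empty] at hAvol
      exact hc0 (le_zero_iff.mp hAvol)
    have hsub : Subsingleton ({i : Fin n // i ≠ j} → ℝ) :=
      ⟨fun f g => funext fun i => (hempty.false i).elim⟩
    have heq : projHyp j '' E₁ = projHyp j '' A := by
      obtain ⟨a, ha⟩ := hE₁ne.image (projHyp j)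
      obtain ⟨b, hb⟩ := hAne.image (projHyp j)
      ext x
      constructor
      · intro _; exact (Subsingleton.elim x b) ▸ hb
      · intro _; exact (Subsingleton.elim x a) ▸ ha
    rw [heq]
  case pos =>
    set p : Fin n → Prop := fun i => i = j with hp
    set e := MeasurableEquiv.piEquivPiSubtypeProd (fun _ : Fin n => ℝ) p with he
    set X := ({i : Fin n // p i} → ℝ) with hX
    set Y := ({i : Fin n // ¬ p i} → ℝ) with hYdef
    have hMP : MeasurePreserving e volume ((volume : Measure X).prod (volume : Measure Y)) := by
      have h := measurePreserving_piEquivPiSubtypeProd (fun _ : Fin n => (volume : Measure ℝ)) p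
      convert h using 1
      all_goals congr 1 <;> · rw [volume_pi]; congr 1; exact Subsingleton.elim _ _
    -- volume of measurable sets via slices
    have hvol : ∀ B : Set (Fin n → ℝ), MeasurableSet B →
        volume B = ∫⁻ y, (volume : Measure X) ((fun x => (x,y)) ⁻¹' (e.symm ⁻¹' B))
          ∂(volume : Measure Y) := by
      intro B hB
      have h1 : MeasurableSet (e.symm ⁻¹' B) := e.symm.measurable hB
      rw [← Measure.prod_apply_symm h1, ← hMP.map_eq,
        Measure.map_apply e.measurable h1]
      congr 1
      rw [← preimage_comp]
      simp
    set F : Set (X × Y) := e.symm ⁻¹' E with hF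
    have hFmeas : MeasurableSet F := e.symm.measurable hEmeas
    set σ : Y → ENNReal := fun y => (volume : Measure X) ((fun x => (x,y)) ⁻¹' F) with hσdef
    have hσ : Measurable σ := measurable_measure_prodMk_right hFmeas
    have htot : (∫⁻ y, σ y ∂(volume : Measure Y)) = ENNReal.ofReal t := by
      rw [← hvol E hEmeas, hEt]
    -- projections are sections
    have hproj : ∀ x : Fin n → ℝ, projHyp j x = (e x).2 := fun x => rfl
    -- comparison of slice integrals for subsets A of E
    have hslice : ∀ A : Set (Fin n → ℝ), A ⊆ E → MeasurableSet A →
        ∀ hAm : MeasurableSet (projHyp j '' A : Set Y),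
        volume A ≤ ∫⁻ y in (projHyp j '' A : Set Y), σ y ∂(volume : Measure Y) := by
      intro A hAE hAmeas hAm
      rw [hvol A hAmeas, ← lintegral_indicator hAm]
      refine lintegral_mono fun y => ?_
      by_cases hy : y ∈ (projHyp j '' A : Set Y)
      · rw [indicator_of_mem hy]
        exact measure_mono (preimage_mono (preimage_mono hAE))
      · rw [indicator_of_notMem hy]
        have hem : ((fun x : X => (x,y)) ⁻¹' (e.symm ⁻¹' A)) = ∅ := by
          ext x
          simp only [mem_preimage, mem_empty_iff_false, iff_false]
          intro hxA
          refine hy ⟨e.symm (x, y), hxA, ?_⟩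
          rw [hproj, e.apply_symm_apply]
        rw [hem]
        simp
    -- the splitting property on Y
    have i₀ : {i : Fin n // ¬ p i} := Classical.choice hY
    have hsplit : ∀ D : Set Y, MeasurableSet D → (volume : Measure Y) D ≠ ⊤ →
        ∀ r ≤ (volume : Measure Y) D, ∃ W, W ⊆ D ∧ MeasurableSet W ∧
          (volume : Measure Y) W = r := fun D hD hfin r hr =>
      splitLemma i₀ D hD hfin hr
    obtain ⟨S, hSmeas, hSint, hSmin⟩ := bathtub (volume : Measure Y) hsplit σ hσ c
      (ENNReal.ofReal t) htot ENNReal.ofReal_ne_top hc0 hclt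
    -- the candidate set
    set E₁' : Set (Fin n → ℝ) := E ∩ e ⁻¹' (univ ×ˢ S) with hE₁'
    have hE₁'meas : MeasurableSet E₁' :=
      hEmeas.inter (e.measurable (MeasurableSet.univ.prod hSmeas))
    have hpre : e.symm ⁻¹' E₁' = F ∩ (univ ×ˢ S) := by
      rw [hE₁', preimage_inter]
      congr 1
      rw [← preimage_comp]
      simp
    have hvolE₁' : volume E₁' = c := by
      rw [hvol E₁' hE₁'meas]
      have hptwise : ∀ y : Y, (volume : Measure X) ((fun x => (x,y)) ⁻¹' (e.symm ⁻¹' E₁'))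
          = S.indicator σ y := by
        intro y
        rw [hpre]
        by_cases hy : y ∈ S
        · rw [indicator_of_mem hy]
          congr 1
          ext x
          simp [hy]
        · rw [indicator_of_notMem hy]
          have : ((fun x : X => (x,y)) ⁻¹' (F ∩ univ ×ˢ S)) = ∅ := by
            ext x
            simp [hy]
          rw [this]
          simp
      calc (∫⁻ y, (volume : Measure X) ((fun x => (x,y)) ⁻¹' (e.symm ⁻¹' E₁'))
            ∂(volume : Measure Y))
          = ∫⁻ y, S.indicator σ y ∂(volume : Measure Y) := by
            exact lintegral_congr hptwise
        _ = ∫⁻ y in S, σ y ∂(volume : Measure Y) := lintegral_indicator hSmeas σ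
        _ = c := hSint
    have hprojE₁' : (projHyp j '' E₁' : Set Y) ⊆ S := by
      rintro y ⟨x, hx, rfl⟩
      have h2 := hx.2
      simp only [mem_preimage, mem_prod, mem_univ, true_and] at h2
      rw [hproj]
      exact h2
    obtain ⟨E₁, hE₁fs, hE₁sub, hE₁vol⟩ := exists_fsigma_subset_eq E₁' hE₁'meas
      (by rw [hvolE₁']; exact ENNReal.ofReal_ne_top)
    rw [hvolE₁'] at hE₁vol
    refine ⟨E₁, hE₁fs, hE₁sub.trans inter_subset_left, hE₁vol, ?_⟩
    intro A hAfs hAE hAvol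
    have hAmeas : MeasurableSet A := hAfs.measurableSet''
    have hAim : MeasurableSet (projHyp j '' A : Set Y) := hAfs.image_measurable
    have hineq : c ≤ ∫⁻ y in (projHyp j '' A : Set Y), σ y ∂(volume : Measure Y) :=
      le_trans hAvol (hslice A hAE hAmeas hAim)
    have hmin := hSmin _ hAim hineq
    calc (volume : Measure Y) (projHyp j '' E₁)
        ≤ (volume : Measure Y) S :=
          measure_mono ((image_mono hE₁sub).trans hprojE₁')
      _ ≤ (volume : Measure Y) (projHyp j '' A) := hmin
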